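/- For every natural number n ≥ 2, the function f(a) = (cos^(2n-2)(a/n) - cos²(a)) / sin²(a) on (0, π/2] is decreasing, and its value at a = π/2 satisfies f(π/2) = cos^(2n-2)(π/(2n)) > 1/4. -/

import Mathlib

open Real

private lemma ckey (j : ℕ) {θ φ : ℝ} (h0 : 0 ≤ θ) (hθφ : θ ≤ φ) :
    ((j : ℝ) + 1) * φ ≤ π / 2 →
    Real.cos (((j : ℝ) + 1) * φ) * Real.cos θ ^ j ≤
      Real.cos (((j : ℝ) + 1) * θ) * Real.cos φ ^ j := by
  have hpi := Real.pi_pos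
  induction j with
  | zero =>
    intro hφ
    simp only [Nat.cast_zero, zero_add, one_mul, pow_zero, mul_one] at *
    exact Real.cos_le_cos_of_nonneg_of_le_pi h0 (by linarith) hθφ
  | succ j ih =>
    intro hφ
    have hj : (0:ℝ) ≤ j := Nat.cast_nonneg j
    have hφ0 : 0 ≤ φ := le_trans h0 hθφ
    have hcast : (((j+1 : ℕ) : ℝ) + 1) = (j:ℝ) + 1 + 1 := by push_cast; ring
    rw [hcast] at hφ ⊢
    have hφ2 : ((j:ℝ)+1) * φ ≤ π/2 := by nlinarith
    have hφ2' : φ ≤ π/2 := by nlinarith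
    have hθ2 : θ ≤ π/2 := le_trans hθφ hφ2'
    have hjθ2 : ((j:ℝ)+1)*θ ≤ π/2 := le_trans (by nlinarith) hφ2
    have hjθ0 : 0 ≤ ((j:ℝ)+1)*θ := by positivity
    have hjφ0 : 0 ≤ ((j:ℝ)+1)*φ := by positivity
    have ihh := ih hφ2
    have hcθ0 : 0 ≤ Real.cos θ := Real.cos_nonneg_of_mem_Icc ⟨by linarith, hθ2⟩
    have hcφ0 : 0 ≤ Real.cos φ := Real.cos_nonneg_of_mem_Icc ⟨by linarith, hφ2'⟩
    have hcφθ : Real.cos φ ≤ Real.cos θ :=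
      Real.cos_le_cos_of_nonneg_of_le_pi h0 (by linarith) hθφ
    have hsθ0 : 0 ≤ Real.sin θ := Real.sin_nonneg_of_nonneg_of_le_pi h0 (by linarith)
    have hsφ0 : 0 ≤ Real.sin φ := Real.sin_nonneg_of_nonneg_of_le_pi hφ0 (by linarith)
    have hsθφ : Real.sin θ ≤ Real.sin φ :=
      Real.strictMonoOn_sin.monotoneOn ⟨by linarith, hθ2⟩ ⟨by linarith, hφ2'⟩ hθφ
    have hS1 : Real.sin (((j:ℝ)+1)*θ) ≤ Real.sin (((j:ℝ)+1)*φ) :=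
      Real.strictMonoOn_sin.monotoneOn ⟨by linarith, hjθ2⟩ ⟨by linarith, hφ2⟩
        (by nlinarith)
    have hS0 : 0 ≤ Real.sin (((j:ℝ)+1)*θ) :=
      Real.sin_nonneg_of_nonneg_of_le_pi hjθ0 (by linarith)
    have hSφ0 : 0 ≤ Real.sin (((j:ℝ)+1)*φ) :=
      Real.sin_nonneg_of_nonneg_of_le_pi hjφ0 (by linarith)
    have e1 : ((j:ℝ) + 1 + 1) * φ = ((j:ℝ)+1)*φ + φ := by ring
    have e2 : ((j:ℝ) + 1 + 1) * θ = ((j:ℝ)+1)*θ + θ := by ring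
    rw [e1, e2, Real.cos_add, Real.cos_add]
    have h1 : Real.cos (((j:ℝ)+1)*φ) * Real.cos φ * Real.cos θ ^ (j+1)
        ≤ Real.cos (((j:ℝ)+1)*θ) * Real.cos θ * Real.cos φ ^ (j+1) := by
      have h := mul_le_mul_of_nonneg_right ihh (mul_nonneg hcθ0 hcφ0)
      calc Real.cos (((j:ℝ)+1)*φ) * Real.cos φ * Real.cos θ ^ (j+1)
          = Real.cos (((j:ℝ)+1)*φ) * Real.cos θ ^ j * (Real.cos θ * Real.cos φ) := by ring
        _ ≤ Real.cos (((j:ℝ)+1)*θ) * Real.cos φ ^ j * (Real.cos θ * Real.cos φ) := h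
        _ = Real.cos (((j:ℝ)+1)*θ) * Real.cos θ * Real.cos φ ^ (j+1) := by ring
    have h2 : Real.sin (((j:ℝ)+1)*θ) * Real.sin θ * Real.cos φ ^ (j+1)
        ≤ Real.sin (((j:ℝ)+1)*φ) * Real.sin φ * Real.cos θ ^ (j+1) := by
      have hp : Real.cos φ ^ (j+1) ≤ Real.cos θ ^ (j+1) := pow_le_pow_left₀ hcφ0 hcφθ _
      have hq : Real.sin (((j:ℝ)+1)*θ) * Real.sin θ ≤ Real.sin (((j:ℝ)+1)*φ) * Real.sin φ :=
        mul_le_mul hS1 hsθφ hsθ0 hSφ0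
      exact mul_le_mul hq hp (pow_nonneg hcφ0 _) (mul_nonneg hSφ0 hsφ0)
    nlinarith [h1, h2]

private lemma skey (m : ℕ) {θ φ : ℝ} (h0 : 0 ≤ θ) (hθφ : θ ≤ φ) :
    ((m : ℝ) + 2) * φ ≤ π / 2 →
    Real.sin (((m : ℝ) + 2) * φ) * (Real.sin θ * Real.cos θ ^ m) ≤
      Real.sin (((m : ℝ) + 2) * θ) * (Real.sin φ * Real.cos φ ^ m) := by
  have hpi := Real.pi_pos
  induction m with
  | zero =>
    intro hφ
    have hφ0 : 0 ≤ φ := le_trans h0 hθφ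
    have hφ2 : φ ≤ π/2 := by nlinarith
    have hθ2 : θ ≤ π/2 := le_trans hθφ hφ2
    have hcθ0 : 0 ≤ Real.cos θ := Real.cos_nonneg_of_mem_Icc ⟨by linarith, hθ2⟩
    have hcφθ : Real.cos φ ≤ Real.cos θ :=
      Real.cos_le_cos_of_nonneg_of_le_pi h0 (by linarith) hθφ
    have hsθ0 : 0 ≤ Real.sin θ := Real.sin_nonneg_of_nonneg_of_le_pi h0 (by linarith)
    have hsφ0 : 0 ≤ Real.sin φ := Real.sin_nonneg_of_nonneg_of_le_pi hφ0 (by linarith)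
    simp only [Nat.cast_zero, zero_add, pow_zero, mul_one]
    rw [Real.sin_two_mul, Real.sin_two_mul]
    nlinarith [mul_le_mul_of_nonneg_left hcφθ (mul_nonneg hsθ0 hsφ0)]
  | succ m ih =>
    intro hφ
    have hm : (0:ℝ) ≤ m := Nat.cast_nonneg m
    have hφ0 : 0 ≤ φ := le_trans h0 hθφ
    have hcast : (((m+1 : ℕ) : ℝ) + 2) = (m:ℝ) + 2 + 1 := by push_cast; ring
    rw [hcast] at hφ ⊢
    have hφ2 : ((m:ℝ)+2) * φ ≤ π/2 := by nlinarith
    have hφ2' : φ ≤ π/2 := by nlinarith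
    have hθ2 : θ ≤ π/2 := le_trans hθφ hφ2'
    have ihh := ih hφ2
    have hck := ckey (m+1) h0 hθφ (by push_cast; nlinarith)
    have hcast2 : (((m+1 : ℕ) : ℝ) + 1) = (m:ℝ) + 2 := by push_cast; ring
    rw [hcast2] at hck
    have hcθ0 : 0 ≤ Real.cos θ := Real.cos_nonneg_of_mem_Icc ⟨by linarith, hθ2⟩
    have hcφ0 : 0 ≤ Real.cos φ := Real.cos_nonneg_of_mem_Icc ⟨by linarith, hφ2'⟩
    have hcφθ : Real.cos φ ≤ Real.cos θ :=
      Real.cos_le_cos_of_nonneg_of_le_pi h0 (by linarith) hθφ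
    have hsθ0 : 0 ≤ Real.sin θ := Real.sin_nonneg_of_nonneg_of_le_pi h0 (by linarith)
    have hsφ0 : 0 ≤ Real.sin φ := Real.sin_nonneg_of_nonneg_of_le_pi hφ0 (by linarith)
    have e1 : ((m:ℝ) + 2 + 1) * φ = ((m:ℝ)+2)*φ + φ := by ring
    have e2 : ((m:ℝ) + 2 + 1) * θ = ((m:ℝ)+2)*θ + θ := by ring
    rw [e1, e2, Real.sin_add, Real.sin_add]
    have h1 : Real.sin (((m:ℝ)+2)*φ) * Real.cos φ * (Real.sin θ * Real.cos θ ^ (m+1))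
        ≤ Real.sin (((m:ℝ)+2)*θ) * Real.cos θ * (Real.sin φ * Real.cos φ ^ (m+1)) := by
      have h := mul_le_mul_of_nonneg_right ihh (mul_nonneg hcθ0 hcφ0)
      calc Real.sin (((m:ℝ)+2)*φ) * Real.cos φ * (Real.sin θ * Real.cos θ ^ (m+1))
          = Real.sin (((m:ℝ)+2)*φ) * (Real.sin θ * Real.cos θ ^ m) * (Real.cos θ * Real.cos φ) := by
            ring
        _ ≤ Real.sin (((m:ℝ)+2)*θ) * (Real.sin φ * Real.cos φ ^ m) * (Real.cos θ * Real.cos φ) := h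
        _ = Real.sin (((m:ℝ)+2)*θ) * Real.cos θ * (Real.sin φ * Real.cos φ ^ (m+1)) := by ring
    have h2 : Real.cos (((m:ℝ)+2)*φ) * Real.sin φ * (Real.sin θ * Real.cos θ ^ (m+1))
        ≤ Real.cos (((m:ℝ)+2)*θ) * Real.sin θ * (Real.sin φ * Real.cos φ ^ (m+1)) := by
      have h := mul_le_mul_of_nonneg_right hck (mul_nonneg hsθ0 hsφ0)
      calc Real.cos (((m:ℝ)+2)*φ) * Real.sin φ * (Real.sin θ * Real.cos θ ^ (m+1))
          = Real.cos (((m:ℝ)+2)*φ) * Real.cos θ ^ (m+1) * (Real.sin θ * Real.sin φ) := by ring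
        _ ≤ Real.cos (((m:ℝ)+2)*θ) * Real.cos φ ^ (m+1) * (Real.sin θ * Real.sin φ) := h
        _ = Real.cos (((m:ℝ)+2)*θ) * Real.sin θ * (Real.sin φ * Real.cos φ ^ (m+1)) := by ring
    nlinarith [h1, h2]

set_option maxHeartbeats 1000000 in
theorem stmt_4 (n : ℕ) (hn : 2 ≤ n) :
    AntitoneOn (fun a : ℝ => (Real.cos (a / n) ^ (2 * n - 2) - Real.cos a ^ 2) / Real.sin a ^ 2)
      (Set.Ioc 0 (π/2)) ∧
    (Real.cos ((π/2) / n) ^ (2 * n - 2) - Real.cos (π/2) ^ 2) / Real.sin (π/2) ^ 2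
      = Real.cos (π / (2 * n)) ^ (2 * n - 2) ∧
    (1 : ℝ) / 4 < Real.cos (π / (2 * n)) ^ (2 * n - 2) := by
  have hpi := Real.pi_pos
  have hn0 : (0:ℝ) < n := by exact_mod_cast Nat.lt_of_lt_of_le (by norm_num) hn
  have hn2 : (2:ℝ) ≤ n := by exact_mod_cast hn
  refine ⟨?_, ?_, ?_⟩
  · -- AntitoneOn
    intro a ha b hb hab
    obtain ⟨ha0, ha2⟩ := ha
    obtain ⟨hb0, hb2⟩ := hb
    simp only
    set θ := a / (n:ℝ) with hθdef
    set φ := b / (n:ℝ) with hφdef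
    have hθ0 : 0 < θ := by positivity
    have hφ0 : 0 < φ := by positivity
    have hθφ : θ ≤ φ := by rw [hθdef, hφdef]; gcongr
    have hnθ : (n:ℝ) * θ = a := by rw [hθdef]; field_simp
    have hnφ : (n:ℝ) * φ = b := by rw [hφdef]; field_simp
    have hcast : ((n - 2 : ℕ) : ℝ) + 2 = (n:ℝ) := by
      have h := Nat.cast_sub hn (R := ℝ)
      push_cast at h
      linarith
    have key := skey (n-2) hθ0.le hθφ (by rw [hcast, hnφ]; exact hb2)
    rw [hcast, hnθ, hnφ] at key
    have hφ2 : φ ≤ π/2 := by nlinarith [hnφ]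
    have hφlt : φ < π/2 := by nlinarith [hnφ, hb2]
    have hθ2 : θ ≤ π/2 := le_trans hθφ hφ2
    have hθlt : θ < π/2 := lt_of_le_of_lt hθφ hφlt
    have hcθ0 : 0 < Real.cos θ := Real.cos_pos_of_mem_Ioo ⟨by linarith, hθlt⟩
    have hcφ0 : 0 < Real.cos φ := Real.cos_pos_of_mem_Ioo ⟨by linarith, hφlt⟩
    have hcφθ : Real.cos φ ≤ Real.cos θ :=
      Real.cos_le_cos_of_nonneg_of_le_pi hθ0.le (by linarith) hθφ
    have hsθ0 : 0 < Real.sin θ := Real.sin_pos_of_pos_of_lt_pi hθ0 (by linarith)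
    have hsφ0 : 0 < Real.sin φ := Real.sin_pos_of_pos_of_lt_pi hφ0 (by linarith)
    have hsa0 : 0 < Real.sin a := Real.sin_pos_of_pos_of_lt_pi ha0 (by linarith)
    have hsb0 : 0 < Real.sin b := Real.sin_pos_of_pos_of_lt_pi hb0 (by linarith)
    -- termwise inequality
    have hterm : ∀ k, k ≤ n - 2 →
        Real.sin b * (Real.sin θ * Real.cos θ ^ k) ≤
        Real.sin a * (Real.sin φ * Real.cos φ ^ k) := by
      intro k hk
      have hj : k + (n - 2 - k) = n - 2 := by omega
      have hpow : Real.cos φ ^ (n-2-k) ≤ Real.cos θ ^ (n-2-k) :=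
        pow_le_pow_left₀ hcφ0.le hcφθ _
      have h3 : Real.sin b * (Real.sin θ * Real.cos θ ^ k) * Real.cos θ ^ (n-2-k)
          ≤ Real.sin a * (Real.sin φ * Real.cos φ ^ k) * Real.cos θ ^ (n-2-k) := by
        have e0 : Real.cos θ ^ k * Real.cos θ ^ (n-2-k) = Real.cos θ ^ (n-2) := by
          rw [← pow_add, hj]
        have e0' : Real.cos φ ^ k * Real.cos φ ^ (n-2-k) = Real.cos φ ^ (n-2) := by
          rw [← pow_add, hj]
        have e1 : Real.sin b * (Real.sin θ * Real.cos θ ^ k) * Real.cos θ ^ (n-2-k)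
            = Real.sin b * (Real.sin θ * Real.cos θ ^ (n-2)) := by
          rw [← e0]; ring
        have e2 : Real.sin a * (Real.sin φ * Real.cos φ ^ (n-2))
            = Real.sin a * (Real.sin φ * Real.cos φ ^ k) * Real.cos φ ^ (n-2-k) := by
          rw [← e0']; ring
        have h4 : Real.sin a * (Real.sin φ * Real.cos φ ^ k) * Real.cos φ ^ (n-2-k)
            ≤ Real.sin a * (Real.sin φ * Real.cos φ ^ k) * Real.cos θ ^ (n-2-k) := by
          apply mul_le_mul_of_nonneg_left hpow
          positivity
        rw [e1]
        exact le_trans (le_trans key (le_of_eq e2)) h4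
      exact le_of_mul_le_mul_right h3 (by positivity)
    -- squared, summed
    have hsq : ∀ k ∈ Finset.range (n-1),
        Real.sin b ^ 2 * (Real.sin θ ^ 2 * (Real.cos θ ^ 2) ^ k) ≤
        Real.sin a ^ 2 * (Real.sin φ ^ 2 * (Real.cos φ ^ 2) ^ k) := by
      intro k hk
      have hk' : k ≤ n - 2 := by
        simp only [Finset.mem_range] at hk; omega
      have h := hterm k hk'
      have hnn : 0 ≤ Real.sin b * (Real.sin θ * Real.cos θ ^ k) := by positivity
      have h5 := mul_le_mul h h hnn (le_trans hnn h)
      calc Real.sin b ^ 2 * (Real.sin θ ^ 2 * (Real.cos θ ^ 2) ^ k)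
          = (Real.sin b * (Real.sin θ * Real.cos θ ^ k)) *
            (Real.sin b * (Real.sin θ * Real.cos θ ^ k)) := by ring
        _ ≤ (Real.sin a * (Real.sin φ * Real.cos φ ^ k)) *
            (Real.sin a * (Real.sin φ * Real.cos φ ^ k)) := h5
        _ = Real.sin a ^ 2 * (Real.sin φ ^ 2 * (Real.cos φ ^ 2) ^ k) := by ring
    have hsum := Finset.sum_le_sum hsq
    have ggeom : ∀ x : ℝ, (1 - x^2) * ∑ k ∈ Finset.range (n-1), (x^2)^k
        = 1 - x^(2*n-2) := by
      intro x
      have h2 : (x^2)^(n-1) = x^(2*n-2) := by rw [← pow_mul]; congr 1; omega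
      rw [← h2]
      linear_combination -(geom_sum_mul (x^2) (n-1))
    have eb : ∑ k ∈ Finset.range (n-1),
        Real.sin b ^ 2 * (Real.sin θ ^ 2 * (Real.cos θ ^ 2) ^ k)
        = Real.sin b ^ 2 * (1 - Real.cos θ ^ (2*n-2)) := by
      rw [Finset.sum_congr rfl
        (fun k _ => by ring :
          ∀ k ∈ Finset.range (n-1),
            Real.sin b ^ 2 * (Real.sin θ ^ 2 * (Real.cos θ ^ 2) ^ k)
            = Real.sin b ^ 2 * Real.sin θ ^ 2 * (Real.cos θ ^ 2) ^ k),
        ← Finset.mul_sum]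
      rw [Real.sin_sq θ]
      linear_combination Real.sin b ^ 2 * ggeom (Real.cos θ)
    have ea : ∑ k ∈ Finset.range (n-1),
        Real.sin a ^ 2 * (Real.sin φ ^ 2 * (Real.cos φ ^ 2) ^ k)
        = Real.sin a ^ 2 * (1 - Real.cos φ ^ (2*n-2)) := by
      rw [Finset.sum_congr rfl
        (fun k _ => by ring :
          ∀ k ∈ Finset.range (n-1),
            Real.sin a ^ 2 * (Real.sin φ ^ 2 * (Real.cos φ ^ 2) ^ k)
            = Real.sin a ^ 2 * Real.sin φ ^ 2 * (Real.cos φ ^ 2) ^ k),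
        ← Finset.mul_sum]
      rw [Real.sin_sq φ]
      linear_combination Real.sin a ^ 2 * ggeom (Real.cos φ)
    rw [eb, ea] at hsum
    rw [div_le_div_iff₀ (pow_pos hsb0 2) (pow_pos hsa0 2), Real.cos_sq', Real.cos_sq']
    nlinarith [hsum]
  · -- value at π/2
    rw [Real.cos_pi_div_two, Real.sin_pi_div_two, div_div]
    norm_num
  · -- lower bound
    set x := π / (2*(n:ℝ)) with hxdef
    have hx0 : 0 < x := by positivity
    have hpi2 : π^2 < 9.9225 := by nlinarith [Real.pi_lt_d2, Real.pi_pos]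
    have hx1 : x < 1 := by
      rw [hxdef, div_lt_one (by positivity)]
      nlinarith [Real.pi_lt_d2]
    have hc : 1 - x^2/2 ≤ Real.cos x := Real.one_sub_sq_div_two_le_cos
    have hcpos : 0 < 1 - x^2/2 := by nlinarith
    have hbern := one_add_mul_le_pow (a := -(x^2/2)) (by nlinarith) (2*n-2)
    have hcastm : ((2*n-2 : ℕ) : ℝ) = 2*(n:ℝ) - 2 := by
      have h := Nat.cast_sub (by omega : 2 ≤ 2*n) (R := ℝ)
      push_cast at h
      linarith
    rw [hcastm] at hbern
    have hpow : (1 - x^2/2) ^ (2*n-2) ≤ Real.cos x ^ (2*n-2) :=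
      pow_le_pow_left₀ hcpos.le hc _
    have h5 : x^2 = π^2/(4*(n:ℝ)^2) := by
      rw [hxdef, div_pow]; congr 1; ring
    have h6 : ((n:ℝ)-1)*π^2 < 3*(n:ℝ)^2 := by
      nlinarith [mul_lt_mul_of_pos_right hpi2 (show (0:ℝ) < (n:ℝ)-1 by linarith),
        sq_nonneg ((n:ℝ)-2)]
    have h7 : ((n:ℝ)-1) * x^2 < 3/4 := by
      rw [h5, mul_div_assoc', div_lt_div_iff₀ (by positivity) (by norm_num)]
      nlinarith [h6]
    have hfinal : (1:ℝ)/4 < 1 + (2*(n:ℝ)-2) * -(x^2/2) := by nlinarith [h7]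
    calc (1:ℝ)/4 < 1 + (2*(n:ℝ)-2) * -(x^2/2) := hfinal
      _ ≤ (1 + -(x^2/2)) ^ (2*n-2) := hbern
      _ = (1 - x^2/2) ^ (2*n-2) := by ring_nf
      _ ≤ Real.cos x ^ (2*n-2) := hpow
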